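/- Let p(x) = 1−x for all x ∈ [0,1], so q(x) = x, and let Δ(x) = min(x, 1−x) for x ∈ [0,1]. Then QΔ(x) = (3x − 4x²)/(4(1−x)) for x ∈ (0, 1/2], and QΔ(x) ≤ (3/4) Δ(x) for every x ∈ [0,1]; consequently Q^n Δ(x) ≤ (3/4)^n Δ(x) for every n ≥ 1 and x ∈ [0,1]. -/

import Mathlib

open MeasureTheory Filter Set

/-- The Diaconis–Friedman transition operator with weight function `p` (and `q = 1 − p`). -/
noncomputable def DFQ (p : ℝ → ℝ) (φ : ℝ → ℝ) : ℝ → ℝ :=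
  fun x => p x * (∫ t in (0 : ℝ)..1, φ (t * x)) +
    (1 - p x) * ∫ t in (0 : ℝ)..1, φ (t * x + 1 - t)


lemma lin_int (a b A B : ℝ) :
    ∫ t in a..b, (A + B * t) = A * (b - a) + B * (b ^ 2 - a ^ 2) / 2 := by
  have h1 : IntervalIntegrable (fun _ : ℝ => A) MeasureTheory.volume a b :=
    intervalIntegrable_const
  have h2 : IntervalIntegrable (fun t : ℝ => B * t) MeasureTheory.volume a b :=
    ((continuous_const.mul continuous_id).intervalIntegrable _ _)
  rw [intervalIntegral.integral_add h1 h2, intervalIntegral.integral_const,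
    intervalIntegral.integral_const_mul, integral_id]
  simp [smul_eq_mul]; ring

lemma I1_low {x : ℝ} (hx0 : 0 ≤ x) (hx : x ≤ 1 / 2) :
    ∫ t in (0:ℝ)..1, min (t * x) (1 - t * x) = x / 2 := by
  have : ∫ t in (0:ℝ)..1, min (t * x) (1 - t * x) = ∫ t in (0:ℝ)..1, (0 + x * t) := by
    apply intervalIntegral.integral_congr
    intro t ht
    rw [Set.uIcc_of_le (by norm_num : (0:ℝ) ≤ 1)] at ht
    show min (t * x) (1 - t * x) = 0 + x * t
    have h1 : t * x ≤ 1 / 2 := by nlinarith [ht.1, ht.2]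
    rw [min_eq_left (by linarith)]; ring
  rw [this, lin_int]; ring

lemma I1_high {x : ℝ} (hx : 1 / 2 ≤ x) (hx1 : x ≤ 1) :
    ∫ t in (0:ℝ)..1, min (t * x) (1 - t * x) = 1 - x / 2 - 1 / (4 * x) := by
  have hx0 : 0 < x := by linarith
  have hc0 : (0:ℝ) ≤ 1 / (2 * x) := by positivity
  have hc1 : 1 / (2 * x) ≤ 1 := by rw [div_le_one (by linarith)]; linarith
  have hcx : 1 / (2 * x) * x = 1 / 2 := by field_simp
  have hint : ∀ a b : ℝ, IntervalIntegrable (fun t => min (t * x) (1 - t * x))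
      MeasureTheory.volume a b := fun a b =>
    ((continuous_id.mul continuous_const).min
      (continuous_const.sub (continuous_id.mul continuous_const))).intervalIntegrable _ _
  rw [← intervalIntegral.integral_add_adjacent_intervals (b := 1 / (2 * x))
    (hint 0 _) (hint _ 1)]
  have e1 : ∫ t in (0:ℝ)..(1 / (2 * x)), min (t * x) (1 - t * x)
      = ∫ t in (0:ℝ)..(1 / (2 * x)), (0 + x * t) := by
    apply intervalIntegral.integral_congr
    intro t ht
    rw [Set.uIcc_of_le hc0] at ht
    show min (t * x) (1 - t * x) = 0 + x * t
    have h1 : t * x ≤ 1 / 2 := by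
      calc t * x ≤ 1 / (2 * x) * x := by nlinarith [ht.2]
      _ = 1 / 2 := hcx
    rw [min_eq_left (by linarith)]; ring
  have e2 : ∫ t in (1 / (2 * x))..1, min (t * x) (1 - t * x)
      = ∫ t in (1 / (2 * x))..1, (1 + (-x) * t) := by
    apply intervalIntegral.integral_congr
    intro t ht
    rw [Set.uIcc_of_le hc1] at ht
    show min (t * x) (1 - t * x) = 1 + (-x) * t
    have h1 : 1 / 2 ≤ t * x := by
      calc (1:ℝ) / 2 = 1 / (2 * x) * x := hcx.symm
      _ ≤ t * x := by nlinarith [ht.1]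
    rw [min_eq_right (by linarith)]; ring
  rw [e1, e2, lin_int, lin_int]
  field_simp
  ring

lemma I2_eq (x : ℝ) :
    (∫ t in (0:ℝ)..1, min (t * x + 1 - t) (1 - (t * x + 1 - t)))
      = ∫ t in (0:ℝ)..1, min (t * (1 - x)) (1 - t * (1 - x)) := by
  apply intervalIntegral.integral_congr
  intro t _
  show min (t * x + 1 - t) (1 - (t * x + 1 - t)) = min (t * (1 - x)) (1 - t * (1 - x))
  rw [min_comm]
  congr 1 <;> ring

lemma DFQ_min_apply (x : ℝ) :
    DFQ (fun y => 1 - y) (fun y => min y (1 - y)) x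
      = (1 - x) * (∫ t in (0:ℝ)..1, min (t * x) (1 - t * x))
        + x * ∫ t in (0:ℝ)..1, min (t * (1 - x)) (1 - t * (1 - x)) := by
  show (1 - x) * _ + (1 - (1 - x)) * _ = _
  rw [I2_eq]
  ring_nf

lemma part1 (x : ℝ) (hx : x ∈ Set.Ioc (0:ℝ) (1/2)) :
    DFQ (fun y => 1 - y) (fun y => min y (1 - y)) x
      = (3 * x - 4 * x ^ 2) / (4 * (1 - x)) := by
  obtain ⟨hx0, hx2⟩ := hx
  have h1x : (1:ℝ)/2 ≤ 1 - x := by linarith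
  rw [DFQ_min_apply, I1_low hx0.le hx2, I1_high h1x (by linarith)]
  have : (1:ℝ) - x ≠ 0 := by linarith
  field_simp
  ring

lemma DFQ_symm (x : ℝ) :
    DFQ (fun y => 1 - y) (fun y => min y (1 - y)) (1 - x)
      = DFQ (fun y => 1 - y) (fun y => min y (1 - y)) x := by
  rw [DFQ_min_apply, DFQ_min_apply]
  have h : (1:ℝ) - (1 - x) = x := by ring
  rw [h]
  ring

lemma part2 (x : ℝ) (hx : x ∈ Set.Icc (0:ℝ) 1) :
    DFQ (fun y => 1 - y) (fun y => min y (1 - y)) x ≤ (3/4) * min x (1 - x) := by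
  obtain ⟨hx0, hx1⟩ := hx
  have key : ∀ z : ℝ, 0 ≤ z → z ≤ 1/2 →
      DFQ (fun y => 1 - y) (fun y => min y (1 - y)) z ≤ (3/4) * z := by
    intro z hz0 hz2
    rcases eq_or_lt_of_le hz0 with h | h
    · rw [← h, DFQ_min_apply]
      simp
    · rw [part1 z ⟨h, hz2⟩, div_le_iff₀ (by linarith)]
      nlinarith
  rcases le_total x (1/2) with h | h
  · rw [min_eq_left (by linarith)]
    exact key x hx0 h
  · rw [min_eq_right (by linarith), ← DFQ_symm]
    exact key (1 - x) (by linarith) (by linarith)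

lemma DFQ_continuous {φ : ℝ → ℝ} (hφ : Continuous φ) :
    Continuous (DFQ (fun y => 1 - y) φ) := by
  unfold DFQ
  apply Continuous.add
  · exact (continuous_const.sub continuous_id).mul
      (intervalIntegral.continuous_parametric_intervalIntegral_of_continuous'
        (f := fun x t => φ (t * x))
        (by exact hφ.comp (continuous_snd.mul continuous_fst)) 0 1)
  · exact (continuous_const.sub (continuous_const.sub continuous_id)).mul
      (intervalIntegral.continuous_parametric_intervalIntegral_of_continuous'
        (f := fun x t => φ (t * x + 1 - t))
        (by exact hφ.comp (((continuous_snd.mul continuous_fst).add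
          continuous_const).sub continuous_snd)) 0 1)

lemma DFQ_const_mul (c : ℝ) (φ : ℝ → ℝ) (x : ℝ) :
    DFQ (fun y => 1 - y) (fun y => c * φ y) x = c * DFQ (fun y => 1 - y) φ x := by
  unfold DFQ
  rw [intervalIntegral.integral_const_mul, intervalIntegral.integral_const_mul]
  ring

lemma DFQ_mono {φ ψ : ℝ → ℝ} (hφ : Continuous φ) (hψ : Continuous ψ)
    (h : ∀ y ∈ Set.Icc (0:ℝ) 1, φ y ≤ ψ y) {x : ℝ} (hx : x ∈ Set.Icc (0:ℝ) 1) :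
    DFQ (fun y => 1 - y) φ x ≤ DFQ (fun y => 1 - y) ψ x := by
  obtain ⟨hx0, hx1⟩ := hx
  have m1 : (∫ t in (0:ℝ)..1, φ (t * x)) ≤ ∫ t in (0:ℝ)..1, ψ (t * x) := by
    apply intervalIntegral.integral_mono_on (by norm_num)
      ((hφ.comp (continuous_id.mul continuous_const)).intervalIntegrable _ _)
      ((hψ.comp (continuous_id.mul continuous_const)).intervalIntegrable _ _)
    intro t ht
    simp only [Function.comp_apply, id_eq, Pi.mul_apply, Pi.add_apply, Pi.sub_apply]
    exact h _ ⟨mul_nonneg ht.1 hx0, by nlinarith [ht.1, ht.2]⟩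
  have m2 : (∫ t in (0:ℝ)..1, φ (t * x + 1 - t)) ≤ ∫ t in (0:ℝ)..1, ψ (t * x + 1 - t) := by
    apply intervalIntegral.integral_mono_on (by norm_num)
      ((hφ.comp (((continuous_id.mul continuous_const).add
        continuous_const).sub continuous_id)).intervalIntegrable _ _)
      ((hψ.comp (((continuous_id.mul continuous_const).add
        continuous_const).sub continuous_id)).intervalIntegrable _ _)
    intro t ht
    simp only [Function.comp_apply, id_eq, Pi.mul_apply, Pi.add_apply, Pi.sub_apply]
    exact h _ ⟨by nlinarith [ht.1, ht.2], by nlinarith [ht.1, ht.2]⟩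
  show (1 - x) * _ + (1 - (1 - x)) * _ ≤ (1 - x) * _ + (1 - (1 - x)) * _
  have : (1:ℝ) - (1 - x) = x := by ring
  rw [this]
  gcongr <;> linarith

/-- with `p(x) = 1 − x` (so `q(x) = x`) and `Δ(x) = min(x, 1−x)`, one has
`QΔ(x) = (3x − 4x²)/(4(1−x))` on `(0,1/2]`, `QΔ ≤ (3/4)Δ` on `[0,1]`, and consequently
`Q^nΔ(x) ≤ (3/4)^n Δ(x)` for all `n ≥ 1` and `x ∈ [0,1]`. -/
theorem stmt19 :
    (∀ x ∈ Set.Ioc (0 : ℝ) (1 / 2),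
      DFQ (fun y => 1 - y) (fun y => min y (1 - y)) x
        = (3 * x - 4 * x ^ 2) / (4 * (1 - x))) ∧
    (∀ x ∈ Set.Icc (0 : ℝ) 1,
      DFQ (fun y => 1 - y) (fun y => min y (1 - y)) x ≤ (3 / 4) * min x (1 - x)) ∧
    ∀ n : ℕ, 1 ≤ n → ∀ x ∈ Set.Icc (0 : ℝ) 1,
      (DFQ (fun y => 1 - y))^[n] (fun y => min y (1 - y)) x
        ≤ (3 / 4) ^ n * min x (1 - x) := by
  have hΔ : Continuous (fun y : ℝ => min y (1 - y)) :=
    continuous_id.min (continuous_const.sub continuous_id)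
  refine ⟨part1, part2, ?_⟩
  have hcont : ∀ n : ℕ,
      Continuous ((DFQ (fun y => 1 - y))^[n] (fun y => min y (1 - y))) := by
    intro n
    induction n with
    | zero => simpa using hΔ
    | succ k ih =>
      rw [Function.iterate_succ_apply']
      exact DFQ_continuous ih
  have main : ∀ n : ℕ, ∀ x ∈ Set.Icc (0:ℝ) 1,
      (DFQ (fun y => 1 - y))^[n + 1] (fun y => min y (1 - y)) x
        ≤ (3 / 4) ^ (n + 1) * min x (1 - x) := by
    intro n
    induction n with
    | zero =>
      intro x hx
      simpa using part2 x hx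
    | succ k ih =>
      intro x hx
      rw [Function.iterate_succ_apply']
      calc DFQ (fun y => 1 - y) ((DFQ (fun y => 1 - y))^[k + 1]
              (fun y => min y (1 - y))) x
          ≤ DFQ (fun y => 1 - y) (fun y => (3/4)^(k+1) * min y (1 - y)) x := by
            apply DFQ_mono (hcont (k + 1))
              (continuous_const.mul hΔ) (fun y hy => ih y hy) hx
        _ = (3/4)^(k+1) * DFQ (fun y => 1 - y) (fun y => min y (1 - y)) x :=
            DFQ_const_mul _ _ x
        _ ≤ (3/4)^(k+1) * ((3/4) * min x (1 - x)) := by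
            exact mul_le_mul_of_nonneg_left (part2 x hx) (by positivity)
        _ = (3/4)^(k+1+1) * min x (1 - x) := by ring
  intro n hn x hx
  obtain ⟨m, rfl⟩ : ∃ m, n = m + 1 := ⟨n - 1, by omega⟩
  exact main m x hx
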